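/- arXiv:1606.03055 — 2 statements merged into one kernel-verified Lean document; each statement's English description precedes it below -/
import Mathlib

section
/- Let f_Q be a Q-level quantizer satisfying the Lloyd–Max stationarity condition, i.e., ∫_{τ_i}^{τ_{i+1}} (m_i − τ) φ(τ) dτ = 0 for every i = 1, …, Q, and set μ = E[f_Q(g) g] and e_Q = E[(f_Q(g) − g)²]. Then η² := E[(f_Q(g) − μ g)² g²] ≤ 3(μ + 1)² = 3(2 − e_Q)². -/
noncomputable section
open MeasureTheory ProbabilityTheory Real Set
open scoped ENNReal NNReal

/-- The standard Gaussian measure on `ℝ`. -/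
def stdGauss : Measure ℝ := gaussianReal 0 1

instance : IsProbabilityMeasure stdGauss := by unfold stdGauss; infer_instance

/-- A `Q`-level quantizer: thresholds `-∞ = τ₁ < τ₂ < … < τ_{Q+1} = +∞` (indexed here by
`Fin (Q+1)`, so `τ 0 = ⊥` and `τ (Fin.last Q) = ⊤`) and values `m₁, …, m_Q`, with the
step function `f` equal to `m i` on the cell `[τ i, τ (i+1))`. -/
structure Quantizer (Q : ℕ) where
  m : Fin Q → ℝ
  τ : Fin (Q + 1) → EReal
  f : ℝ → ℝ
  τ_bot : τ 0 = ⊥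
  τ_top : τ (Fin.last Q) = ⊤
  τ_mono : StrictMono τ
  f_eq : ∀ (i : Fin Q) (t : ℝ), τ i.castSucc ≤ (t : EReal) → (t : EReal) < τ i.succ → f t = m i

/-- The `i`-th quantization cell `[τ_i, τ_{i+1})` (as a subset of `ℝ`). -/
def Quantizer.cell {Q : ℕ} (q : Quantizer Q) (i : Fin Q) : Set ℝ :=
  {t : ℝ | q.τ i.castSucc ≤ (t : EReal) ∧ (t : EReal) < q.τ i.succ}

/-- The mean squared error `E[(f_Q(g) - g)²]` of a quantizer. -/
def MSE {Q : ℕ} (q : Quantizer Q) : ℝ := ∫ t, (q.f t - t) ^ 2 ∂stdGauss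

/-- Lloyd–Max stationarity: `∫_{τ_i}^{τ_{i+1}} (m_i − τ) φ(τ) dτ = 0` for every cell,
written as an integral against the standard Gaussian measure. -/
def LloydMaxStationary {Q : ℕ} (q : Quantizer Q) : Prop :=
  ∀ i : Fin Q, ∫ t in q.cell i, (q.m i - t) ∂stdGauss = 0

/-! ### Auxiliary lemmas -/

-- Cauchy–Schwarz for integrals
lemma integral_cs {α : Type*} [MeasurableSpace α] {ν : Measure α} {u v : α → ℝ}
    (hu : Integrable (fun x => u x ^ 2) ν) (hv : Integrable (fun x => v x ^ 2) ν)
    (huv : Integrable (fun x => u x * v x) ν) :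
    (∫ x, u x * v x ∂ν) ^ 2 ≤ (∫ x, u x ^ 2 ∂ν) * (∫ x, v x ^ 2 ∂ν) := by
  set A := ∫ x, u x ^ 2 ∂ν
  set B := ∫ x, u x * v x ∂ν
  set Cc := ∫ x, v x ^ 2 ∂ν
  have key : ∀ lam : ℝ, 0 ≤ Cc * (lam * lam) + (-2 * B) * lam + A := by
    intro lam
    have e1 : (fun x => (u x - lam * v x) ^ 2)
        = fun x => (u x ^ 2 - 2 * lam * (u x * v x)) + (lam ^ 2) * v x ^ 2 := by
      funext x; ring
    have h1 : Integrable (fun x => (u x - lam * v x) ^ 2) ν := by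
      rw [e1]; exact (hu.sub (huv.const_mul _)).add (hv.const_mul _)
    have h2 : (0:ℝ) ≤ ∫ x, (u x - lam * v x) ^ 2 ∂ν :=
      integral_nonneg fun x => sq_nonneg _
    have h3 : ∫ x, (u x - lam * v x) ^ 2 ∂ν
        = A - (2 * lam) * B + lam ^ 2 * Cc := by
      have ia : Integrable (fun x => u x ^ 2 - 2 * lam * (u x * v x)) ν :=
        hu.sub (huv.const_mul (2*lam))
      have ib : Integrable (fun x => lam ^ 2 * v x ^ 2) ν := hv.const_mul _
      have ic : Integrable (fun x => 2 * lam * (u x * v x)) ν := huv.const_mul _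
      rw [e1]
      rw [integral_add ia ib, integral_sub hu ic, integral_const_mul, integral_const_mul]
    nlinarith [h2, h3]
  have hd := discrim_le_zero key
  rw [discrim] at hd
  nlinarith [hd]

lemma stdGauss_eq_withDensity :
    stdGauss = (volume : Measure ℝ).withDensity
      (fun x => ((gaussianPDFReal 0 1 x).toNNReal : ℝ≥0∞)) := by
  have : stdGauss = (volume : Measure ℝ).withDensity (gaussianPDF 0 1) :=
    gaussianReal_of_var_ne_zero 0 one_ne_zero
  rw [this]; rfl

lemma stdGauss_integral_eq (g : ℝ → ℝ) :
    ∫ t, g t ∂stdGauss = ∫ t, gaussianPDFReal 0 1 t * g t := by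
  rw [stdGauss_eq_withDensity,
    integral_withDensity_eq_integral_smul (measurable_gaussianPDFReal 0 1).real_toNNReal]
  congr 1; funext x
  rw [NNReal.smul_def, Real.coe_toNNReal _ (gaussianPDFReal_nonneg 0 1 x), smul_eq_mul]

lemma stdGauss_integrable_iff (g : ℝ → ℝ) :
    Integrable g stdGauss ↔ Integrable (fun t => gaussianPDFReal 0 1 t * g t) volume := by
  rw [stdGauss_eq_withDensity,
    integrable_withDensity_iff_integrable_smul (measurable_gaussianPDFReal 0 1).real_toNNReal]
  constructor <;> intro h <;> refine h.congr (Filter.Eventually.of_forall fun x => ?_) <;>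
    simp [NNReal.smul_def, Real.coe_toNNReal _ (gaussianPDFReal_nonneg 0 1 x)]

lemma pdf_eq (x : ℝ) : gaussianPDFReal 0 1 x = (√(2 * π))⁻¹ * rexp (-(1/2) * x ^ 2) := by
  rw [gaussianPDFReal]
  push_cast
  ring_nf

lemma integrable_pow_mul_exp (k : ℕ) :
    Integrable (fun x : ℝ => |x| ^ k * rexp (-(1/2) * x ^ 2)) volume := by
  have h := (integrable_rpow_mul_exp_neg_mul_sq (b := 1/2) (by norm_num)
    (s := (k : ℝ)) (lt_of_lt_of_le neg_one_lt_zero (Nat.cast_nonneg k))).abs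
  refine h.congr (Filter.Eventually.of_forall fun x => ?_)
  show |x ^ (k:ℝ) * rexp (-(1/2) * x ^ 2)| = |x| ^ k * rexp (-(1/2) * x ^ 2)
  rw [abs_mul, abs_of_nonneg (exp_pos _).le, rpow_natCast, abs_pow]

lemma stdGauss_integrable_absPow (k : ℕ) :
    Integrable (fun t : ℝ => |t| ^ k) stdGauss := by
  rw [stdGauss_integrable_iff]
  refine (integrable_pow_mul_exp k).mono' ?_ (Filter.Eventually.of_forall fun x => ?_)
  · exact ((measurable_gaussianPDFReal 0 1).mul
      ((measurable_id.abs).pow measurable_const)).aestronglyMeasurable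
  · rw [Real.norm_eq_abs, abs_mul, abs_of_nonneg (gaussianPDFReal_nonneg 0 1 x),
      abs_of_nonneg (by positivity), pdf_eq]
    rw [mul_comm (|x| ^ k) _]
    gcongr
    rw [mul_comm]
    refine mul_le_of_le_one_right (by positivity) ?_
    have h1 : (1:ℝ) ≤ √(2 * π) := by
      rw [show (1:ℝ) = √1 by simp]
      exact Real.sqrt_le_sqrt (by nlinarith [pi_gt_three])
    rw [inv_le_one_iff₀]
    right; exact h1

lemma stdGauss_integrable_bound {h : ℝ → ℝ} (hm : AEStronglyMeasurable h stdGauss)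
    (C : ℝ) (k : ℕ) (hb : ∀ t, |h t| ≤ C * |t| ^ k) :
    Integrable h stdGauss := by
  refine ((stdGauss_integrable_absPow k).const_mul C).mono' hm
    (Filter.Eventually.of_forall fun x => ?_)
  simpa using hb x

lemma integral_Ioi_pow_exp (k : ℕ) :
    ∫ x in Ioi (0:ℝ), x ^ k * rexp (-(1/2) * x ^ 2)
      = ((1:ℝ)/2) ^ (-(((k:ℝ)) + 1)/2) * (1/2) * Real.Gamma (((k:ℝ) + 1)/2) := by
  rw [← integral_rpow_mul_exp_neg_mul_rpow (p := 2) (q := (k:ℝ)) (b := 1/2) two_pos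
    (lt_of_lt_of_le neg_one_lt_zero (Nat.cast_nonneg k)) (by norm_num)]
  refine setIntegral_congr_fun measurableSet_Ioi fun x hx => ?_
  rw [show ((2:ℝ)) = ((2:ℕ):ℝ) by norm_num, rpow_natCast, rpow_natCast]

lemma two_rpow_three_halves : (2:ℝ) ^ ((3:ℝ)/2) = 2 * √2 := by
  rw [show (3:ℝ)/2 = 1 + 1/2 by norm_num, rpow_add two_pos, rpow_one, ← Real.sqrt_eq_rpow]

lemma two_rpow_five_halves : (2:ℝ) ^ ((5:ℝ)/2) = 4 * √2 := by
  rw [show (5:ℝ)/2 = 2 + 1/2 by norm_num, rpow_add two_pos, ← Real.sqrt_eq_rpow,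
    show ((2:ℝ)) ^ (2:ℝ) = ((2:ℝ)) ^ ((2:ℕ):ℝ) by norm_num, rpow_natCast]
  norm_num

lemma half_rpow_neg (y : ℝ) : ((1:ℝ)/2) ^ (-y) = (2:ℝ) ^ y := by
  rw [show (1:ℝ)/2 = 2⁻¹ by norm_num, Real.inv_rpow (by norm_num),
    ← Real.rpow_neg (by norm_num), neg_neg]

lemma gamma_three_halves : Real.Gamma ((3:ℝ)/2) = √π / 2 := by
  rw [show (3:ℝ)/2 = 1/2 + 1 by norm_num, Real.Gamma_add_one (by norm_num),
    Real.Gamma_one_half_eq]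
  ring

lemma gamma_five_halves : Real.Gamma ((5:ℝ)/2) = 3/4 * √π := by
  rw [show (5:ℝ)/2 = 3/2 + 1 by norm_num, Real.Gamma_add_one (by norm_num),
    gamma_three_halves]
  ring

lemma stdGauss_sq : ∫ t, t ^ 2 ∂stdGauss = 1 := by
  rw [stdGauss_integral_eq]
  have h1 : ∫ t:ℝ, gaussianPDFReal 0 1 t * t ^ 2
      = (√(2*π))⁻¹ * ∫ t:ℝ, t ^ 2 * rexp (-(1/2) * t ^ 2) := by
    rw [← integral_const_mul]; congr 1; funext x; rw [pdf_eq]; ring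
  have h2 : ∫ t:ℝ, t ^ 2 * rexp (-(1/2) * t ^ 2)
      = 2 * ∫ x in Ioi (0:ℝ), x ^ 2 * rexp (-(1/2) * x ^ 2) := by
    rw [← integral_comp_abs (f := fun y => y ^ 2 * rexp (-(1/2) * y ^ 2))]
    congr 1; funext x; rw [sq_abs]
  rw [h1, h2, integral_Ioi_pow_exp 2]
  have h3 : (-((((2:ℕ)):ℝ) + 1)/2) = -((3:ℝ)/2) := by push_cast; norm_num
  have h4 : ((((2:ℕ)):ℝ) + 1)/2 = (3:ℝ)/2 := by push_cast; norm_num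
  rw [h3, h4, half_rpow_neg, two_rpow_three_halves, gamma_three_halves,
    Real.sqrt_mul (by norm_num : (0:ℝ) ≤ 2) π]
  have hs2 : √2 ≠ 0 := by positivity
  have hsp : √π ≠ 0 := by positivity
  field_simp

lemma stdGauss_quartic : ∫ t, t ^ 4 ∂stdGauss = 3 := by
  rw [stdGauss_integral_eq]
  have h1 : ∫ t:ℝ, gaussianPDFReal 0 1 t * t ^ 4
      = (√(2*π))⁻¹ * ∫ t:ℝ, t ^ 4 * rexp (-(1/2) * t ^ 2) := by
    rw [← integral_const_mul]; congr 1; funext x; rw [pdf_eq]; ring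
  have h2 : ∫ t:ℝ, t ^ 4 * rexp (-(1/2) * t ^ 2)
      = 2 * ∫ x in Ioi (0:ℝ), x ^ 4 * rexp (-(1/2) * x ^ 2) := by
    rw [← integral_comp_abs (f := fun y => y ^ 4 * rexp (-(1/2) * y ^ 2))]
    congr 1; funext x
    rw [show |x| ^ 4 = x ^ 4 by rw [← abs_pow]; exact abs_of_nonneg (by positivity), sq_abs]
  rw [h1, h2, integral_Ioi_pow_exp 4]
  have h3 : (-((((4:ℕ)):ℝ) + 1)/2) = -((5:ℝ)/2) := by push_cast; norm_num
  have h4 : ((((4:ℕ)):ℝ) + 1)/2 = (5:ℝ)/2 := by push_cast; norm_num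
  rw [h3, h4, half_rpow_neg, two_rpow_five_halves, gamma_five_halves,
    Real.sqrt_mul (by norm_num : (0:ℝ) ≤ 2) π]
  have hs2 : √2 ≠ 0 := by positivity
  have hsp : √π ≠ 0 := by positivity
  field_simp

namespace Quantizer
variable {Q : ℕ} (q : Quantizer Q)

lemma exists_cell (t : ℝ) : ∃ i : Fin Q, t ∈ q.cell i := by
  classical
  set S : Finset (Fin (Q+1)) := Finset.univ.filter (fun j => q.τ j ≤ (t:EReal)) with hS
  have h0 : (0 : Fin (Q+1)) ∈ S := by
    simp only [hS, Finset.mem_filter, Finset.mem_univ, true_and, q.τ_bot]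
    exact bot_le
  set j := S.max' ⟨0, h0⟩ with hj
  have hjS : j ∈ S := S.max'_mem _
  have hjle : q.τ j ≤ (t:EReal) := (Finset.mem_filter.mp hjS).2
  have hjne : j ≠ Fin.last Q := by
    intro h
    rw [h, q.τ_top] at hjle
    exact (EReal.coe_lt_top t).not_ge hjle
  have hjQ : (j : ℕ) < Q := by
    have := Fin.val_lt_last hjne
    simpa using this
  refine ⟨⟨(j : ℕ), hjQ⟩, ?_, ?_⟩
  · have : (⟨(j : ℕ), hjQ⟩ : Fin Q).castSucc = j := by
      ext; simp
    rw [this]; exact hjle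
  · by_contra hcon
    push_neg at hcon
    have hmem : (⟨(j : ℕ), hjQ⟩ : Fin Q).succ ∈ S := by
      simp only [hS, Finset.mem_filter, Finset.mem_univ, true_and]
      exact hcon
    have hle := S.le_max' _ hmem
    rw [← hj] at hle
    have : (j : ℕ) + 1 ≤ (j : ℕ) := by
      have hv : ((⟨(j : ℕ), hjQ⟩ : Fin Q).succ : Fin (Q+1)).val = (j : ℕ) + 1 := rfl
      calc (j : ℕ) + 1 = _ := hv.symm
        _ ≤ (j : ℕ) := hle
    omega

lemma cell_unique {t : ℝ} {i j : Fin Q} (hi : t ∈ q.cell i) (hj : t ∈ q.cell j) : i = j := by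
  rcases lt_trichotomy i j with h | h | h
  · exfalso
    have hle : i.succ ≤ j.castSucc := by
      rw [Fin.le_def]
      have := Fin.lt_def.mp h
      simp only [Fin.val_succ, Fin.coe_castSucc]
      omega
    exact absurd ((q.τ_mono.monotone hle).trans hj.1) (not_le.mpr hi.2)
  · exact h
  · exfalso
    have hle : j.succ ≤ i.castSucc := by
      rw [Fin.le_def]
      have := Fin.lt_def.mp h
      simp only [Fin.val_succ, Fin.coe_castSucc]
      omega
    exact absurd ((q.τ_mono.monotone hle).trans hi.1) (not_le.mpr hj.2)

lemma measurableSet_cell (i : Fin Q) : MeasurableSet (q.cell i) := by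
  have : q.cell i = (fun t : ℝ => (t : EReal)) ⁻¹' (Ico (q.τ i.castSucc) (q.τ i.succ)) := rfl
  rw [this]
  exact measurable_coe_real_ereal measurableSet_Ico

lemma f_eq_sum : q.f = fun t => ∑ i : Fin Q, (q.cell i).indicator (fun _ => q.m i) t := by
  funext t
  obtain ⟨i0, h0⟩ := q.exists_cell t
  rw [Finset.sum_eq_single i0]
  · rw [Set.indicator_of_mem h0]
    exact q.f_eq i0 t h0.1 h0.2
  · intro j _ hji
    exact Set.indicator_of_notMem (fun hj => hji (q.cell_unique hj h0)) _
  · intro h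
    exact absurd (Finset.mem_univ i0) h

lemma measurable_f : Measurable q.f := by
  rw [q.f_eq_sum]
  exact Finset.measurable_sum _ fun i _ =>
    Measurable.indicator measurable_const (q.measurableSet_cell i)

lemma exists_bound (hQ : 0 < Q) : ∃ C : ℝ, 0 ≤ C ∧ ∀ t, |q.f t| ≤ C := by
  have hne : (Finset.univ : Finset (Fin Q)).Nonempty := ⟨⟨0, hQ⟩, Finset.mem_univ _⟩
  refine ⟨Finset.univ.sup' hne (fun i => |q.m i|), ?_, ?_⟩
  · exact le_trans (abs_nonneg (q.m ⟨0, hQ⟩))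
      (Finset.le_sup' (fun i => |q.m i|) (Finset.mem_univ (⟨0, hQ⟩ : Fin Q)))
  · intro t
    obtain ⟨i, hi⟩ := q.exists_cell t
    rw [q.f_eq i t hi.1 hi.2]
    exact Finset.le_sup' (fun i => |q.m i|) (Finset.mem_univ i)

lemma integral_eq_sum (h : ℝ → ℝ) (hint : Integrable h stdGauss) :
    ∫ t, h t ∂stdGauss = ∑ i : Fin Q, ∫ t in q.cell i, h t ∂stdGauss := by
  have hu : (⋃ i ∈ (Finset.univ : Finset (Fin Q)), q.cell i) = (univ : Set ℝ) := by
    refine eq_univ_of_forall fun t => ?_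
    obtain ⟨i, hi⟩ := q.exists_cell t
    exact mem_biUnion (Finset.mem_univ i) hi
  have := integral_biUnion_finset (μ := stdGauss) (f := h) Finset.univ
    (fun i _ => q.measurableSet_cell i)
    (fun i _ j _ hij => Set.disjoint_left.mpr fun t hti htj => hij (q.cell_unique hti htj))
    (fun i _ => hint.integrableOn)
  rw [hu] at this
  rw [← this, Measure.restrict_univ]

end Quantizer

lemma cell_moment_bound {mi a S2 S4 : ℝ} (ha : 0 ≤ a) (hS4 : 0 ≤ S4)
    (hcs1 : (mi * a)^2 ≤ S2 * a) (hcs2 : S2^2 ≤ S4 * a) : mi^4 * a ≤ S4 := by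
  rcases ha.eq_or_lt with h | h
  · rw [← h]; simpa using hS4
  · have h2 : mi^2 * a ≤ S2 := by nlinarith
    have h3 : 0 ≤ S2 := le_trans (by positivity) h2
    have h4 : mi^4 * a^2 ≤ S4 * a := by nlinarith
    nlinarith

theorem lloydMax_eta_sq_bound {Q : ℕ} (q : Quantizer Q)
    (hq : LloydMaxStationary q)
    (μ : ℝ) (hμ : μ = ∫ t, q.f t * t ∂stdGauss)
    (eQ : ℝ) (heQ : eQ = ∫ t, (q.f t - t) ^ 2 ∂stdGauss) :
    (∫ t, (q.f t - μ * t) ^ 2 * t ^ 2 ∂stdGauss ≤ 3 * (μ + 1) ^ 2) ∧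
    3 * (μ + 1) ^ 2 = 3 * (2 - eQ) ^ 2 := by
  classical
  -- `Q` must be positive
  have hQ : 0 < Q := by
    rcases Nat.eq_zero_or_pos Q with h | h
    · exfalso
      subst h
      have h2 := q.τ_top
      rw [show (Fin.last 0) = 0 from rfl, q.τ_bot] at h2
      exact absurd h2 bot_ne_top
    · exact h
  obtain ⟨C, hC0, hC⟩ := q.exists_bound hQ
  have hFm := q.measurable_f
  -- integrability of everything in sight
  have it : Integrable (fun t : ℝ => t) stdGauss := by
    refine stdGauss_integrable_bound measurable_id.aestronglyMeasurable 1 1 fun t => ?_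
    simp
  have it2 : Integrable (fun t : ℝ => t ^ 2) stdGauss := by
    refine stdGauss_integrable_bound (measurable_id.pow_const 2).aestronglyMeasurable 1 2
      fun t => ?_
    rw [abs_pow]; simp
  have it4 : Integrable (fun t : ℝ => t ^ 4) stdGauss := by
    refine stdGauss_integrable_bound (measurable_id.pow_const 4).aestronglyMeasurable 1 4
      fun t => ?_
    rw [abs_pow]; simp
  have iF2 : Integrable (fun t => q.f t ^ 2) stdGauss := by
    refine stdGauss_integrable_bound (hFm.pow_const 2).aestronglyMeasurable (C^2) 0 fun t => ?_
    rw [pow_zero, mul_one, abs_pow]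
    exact pow_le_pow_left₀ (abs_nonneg _) (hC t) 2
  have iF4 : Integrable (fun t => q.f t ^ 4) stdGauss := by
    refine stdGauss_integrable_bound (hFm.pow_const 4).aestronglyMeasurable (C^4) 0 fun t => ?_
    rw [pow_zero, mul_one, abs_pow]
    exact pow_le_pow_left₀ (abs_nonneg _) (hC t) 4
  have iFt : Integrable (fun t => q.f t * t) stdGauss := by
    refine stdGauss_integrable_bound (hFm.mul measurable_id).aestronglyMeasurable C 1 fun t => ?_
    rw [abs_mul, pow_one]
    exact mul_le_mul_of_nonneg_right (hC t) (abs_nonneg t)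
  have iFt3 : Integrable (fun t => q.f t * t ^ 3) stdGauss := by
    refine stdGauss_integrable_bound (hFm.mul (measurable_id.pow_const 3)).aestronglyMeasurable
      C 3 fun t => ?_
    rw [abs_mul, abs_pow]
    exact mul_le_mul_of_nonneg_right (hC t) (by positivity)
  have iF2t2 : Integrable (fun t => q.f t ^ 2 * t ^ 2) stdGauss := by
    refine stdGauss_integrable_bound
      ((hFm.pow_const 2).mul (measurable_id.pow_const 2)).aestronglyMeasurable (C^2) 2
      fun t => ?_
    rw [abs_mul, abs_pow, abs_pow]
    exact mul_le_mul_of_nonneg_right (pow_le_pow_left₀ (abs_nonneg _) (hC t) 2) (by positivity)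
  -- cell masses
  set a : Fin Q → ℝ := fun i => (stdGauss (q.cell i)).toReal with ha
  have ha0 : ∀ i, 0 ≤ a i := fun i => ENNReal.toReal_nonneg
  have hconst : ∀ (i : Fin Q) (c : ℝ), ∫ _ in q.cell i, c ∂stdGauss = c * a i := by
    intro i c
    rw [setIntegral_const, smul_eq_mul, mul_comm]; rfl
  -- stationarity: cell means
  have hstat : ∀ i, ∫ t in q.cell i, t ∂stdGauss = q.m i * a i := by
    intro i
    have h0 := hq i
    rw [integral_sub (integrable_const _) it.integrableOn, hconst i (q.m i)] at h0
    linarith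
  -- `μ = E[f²] = ∑ mᵢ² aᵢ`
  have hμsum : μ = ∑ i : Fin Q, q.m i ^ 2 * a i := by
    rw [hμ, q.integral_eq_sum _ iFt]
    refine Finset.sum_congr rfl fun i _ => ?_
    have h1 : ∫ t in q.cell i, q.f t * t ∂stdGauss = ∫ t in q.cell i, q.m i * t ∂stdGauss :=
      setIntegral_congr_fun (q.measurableSet_cell i)
        (fun x hx => by rw [q.f_eq i x hx.1 hx.2])
    rw [h1, integral_const_mul, hstat i]
    ring
  have hF2sum : ∫ t, q.f t ^ 2 ∂stdGauss = ∑ i : Fin Q, q.m i ^ 2 * a i := by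
    rw [q.integral_eq_sum _ iF2]
    refine Finset.sum_congr rfl fun i _ => ?_
    have h1 : ∫ t in q.cell i, q.f t ^ 2 ∂stdGauss
        = ∫ _ in q.cell i, q.m i ^ 2 ∂stdGauss :=
      setIntegral_congr_fun (q.measurableSet_cell i)
        (fun x hx => by rw [q.f_eq i x hx.1 hx.2])
    rw [h1, hconst]
  have hμF2 : μ = ∫ t, q.f t ^ 2 ∂stdGauss := by rw [hμsum, hF2sum]
  have hμ0 : 0 ≤ μ := by
    rw [hμF2]; exact integral_nonneg fun t => sq_nonneg _
  -- `E[f⁴] ≤ E[g⁴] = 3`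
  have hF4sum : ∫ t, q.f t ^ 4 ∂stdGauss = ∑ i : Fin Q, q.m i ^ 4 * a i := by
    rw [q.integral_eq_sum _ iF4]
    refine Finset.sum_congr rfl fun i _ => ?_
    have h1 : ∫ t in q.cell i, q.f t ^ 4 ∂stdGauss
        = ∫ _ in q.cell i, q.m i ^ 4 ∂stdGauss :=
      setIntegral_congr_fun (q.measurableSet_cell i)
        (fun x hx => by rw [q.f_eq i x hx.1 hx.2])
    rw [h1, hconst]
  have hF4le : ∫ t, q.f t ^ 4 ∂stdGauss ≤ 3 := by
    have ht4sum : (3:ℝ) = ∑ i : Fin Q, ∫ t in q.cell i, t ^ 4 ∂stdGauss := by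
      rw [← stdGauss_quartic, q.integral_eq_sum _ it4]
    rw [hF4sum, ht4sum]
    refine Finset.sum_le_sum fun i _ => ?_
    have hS4 : 0 ≤ ∫ t in q.cell i, t ^ 4 ∂stdGauss :=
      integral_nonneg fun t => by positivity
    have hu1 : Integrable (fun x : ℝ => x ^ 2) (stdGauss.restrict (q.cell i)) :=
      it2.integrableOn
    have hv1 : Integrable (fun _ : ℝ => (1:ℝ) ^ 2) (stdGauss.restrict (q.cell i)) :=
      integrable_const _
    have huv1 : Integrable (fun x : ℝ => x * 1) (stdGauss.restrict (q.cell i)) :=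
      it.integrableOn.congr (Filter.Eventually.of_forall fun x => (mul_one x).symm)
    have key1 : (∫ x in q.cell i, x * 1 ∂stdGauss) ^ 2
        ≤ (∫ x in q.cell i, x ^ 2 ∂stdGauss) * (∫ _ in q.cell i, (1:ℝ) ^ 2 ∂stdGauss) :=
      integral_cs hu1 hv1 huv1
    have e1 : ∫ x in q.cell i, x * 1 ∂stdGauss = q.m i * a i := by
      rw [← hstat i]
      exact setIntegral_congr_fun (q.measurableSet_cell i) (fun x _ => mul_one x)
    have e2 : ∫ _ in q.cell i, (1:ℝ) ^ 2 ∂stdGauss = a i := by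
      rw [hconst]; ring
    rw [e1, e2] at key1
    have hu2 : Integrable (fun x : ℝ => (x ^ 2) ^ 2) (stdGauss.restrict (q.cell i)) :=
      it4.integrableOn.congr (Filter.Eventually.of_forall fun x => by ring)
    have huv2 : Integrable (fun x : ℝ => x ^ 2 * 1) (stdGauss.restrict (q.cell i)) :=
      it2.integrableOn.congr (Filter.Eventually.of_forall fun x => (mul_one _).symm)
    have key2 : (∫ x in q.cell i, x ^ 2 * 1 ∂stdGauss) ^ 2
        ≤ (∫ x in q.cell i, (x ^ 2) ^ 2 ∂stdGauss) * (∫ _ in q.cell i, (1:ℝ) ^ 2 ∂stdGauss) :=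
      integral_cs hu2 hv1 huv2
    have e3 : ∫ x in q.cell i, x ^ 2 * 1 ∂stdGauss = ∫ x in q.cell i, x ^ 2 ∂stdGauss :=
      setIntegral_congr_fun (q.measurableSet_cell i) (fun x _ => mul_one _)
    have e4 : ∫ x in q.cell i, (x ^ 2) ^ 2 ∂stdGauss = ∫ x in q.cell i, x ^ 4 ∂stdGauss :=
      setIntegral_congr_fun (q.measurableSet_cell i) (fun x _ => by ring)
    rw [e3, e4, e2] at key2
    exact cell_moment_bound (ha0 i) hS4 key1 key2
  -- second claim: `eQ = 1 - μ`
  have heQ1 : eQ = 1 - μ := by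
    have e : (fun t => (q.f t - t) ^ 2)
        = fun t => (q.f t ^ 2 - 2 * (q.f t * t)) + t ^ 2 := funext fun t => by ring
    have i1 : Integrable (fun t => 2 * (q.f t * t)) stdGauss := iFt.const_mul 2
    have i0 : Integrable (fun t => q.f t ^ 2 - 2 * (q.f t * t)) stdGauss := iF2.sub i1
    rw [heQ, e, integral_add i0 it2, integral_sub iF2 i1, integral_const_mul,
      stdGauss_sq, ← hμ, ← hμF2]
    ring
  refine ⟨?_, by rw [show (2:ℝ) - eQ = μ + 1 by rw [heQ1]; ring]⟩
  -- the main bound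
  set A := ∫ t, q.f t ^ 2 * t ^ 2 ∂stdGauss with hA
  set B := ∫ t, q.f t * t ^ 3 ∂stdGauss with hB
  have hA0 : 0 ≤ A := integral_nonneg fun t => by positivity
  have hF40 : 0 ≤ ∫ t, q.f t ^ 4 ∂stdGauss := integral_nonneg fun t => by positivity
  -- Cauchy–Schwarz: A ≤ 3
  have hAcs : A ^ 2 ≤ (∫ t, (q.f t ^ 2) ^ 2 ∂stdGauss) * (∫ t : ℝ, (t ^ 2) ^ 2 ∂stdGauss) := by
    refine integral_cs ?_ ?_ ?_
    · exact iF4.congr (Filter.Eventually.of_forall fun t => by ring)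
    · exact it4.congr (Filter.Eventually.of_forall fun t => by ring)
    · exact iF2t2
  have eA1 : ∫ t, (q.f t ^ 2) ^ 2 ∂stdGauss = ∫ t, q.f t ^ 4 ∂stdGauss :=
    integral_congr_ae (Filter.Eventually.of_forall fun t => by ring)
  have eA2 : ∫ t : ℝ, (t ^ 2) ^ 2 ∂stdGauss = 3 := by
    rw [← stdGauss_quartic]
    exact integral_congr_ae (Filter.Eventually.of_forall fun t => by ring)
  rw [eA1, eA2] at hAcs
  have hA3 : A ≤ 3 := by nlinarith [hAcs, hF4le, hA0, hF40]
  -- Cauchy–Schwarz: B² ≤ 3 A ≤ 9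
  have hBcs : B ^ 2 ≤ (∫ t, (q.f t * t) ^ 2 ∂stdGauss) * (∫ t : ℝ, (t ^ 2) ^ 2 ∂stdGauss) := by
    have h := integral_cs (ν := stdGauss) (u := fun t => q.f t * t) (v := fun t : ℝ => t ^ 2)
      (iF2t2.congr (Filter.Eventually.of_forall fun t => by ring))
      (it4.congr (Filter.Eventually.of_forall fun t => by ring))
      (iFt3.congr (Filter.Eventually.of_forall fun t => by ring))
    have e : ∫ t, q.f t * t * t ^ 2 ∂stdGauss = B :=
      integral_congr_ae (Filter.Eventually.of_forall fun t => by ring)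
    rw [e] at h
    exact h
  have eB1 : ∫ t, (q.f t * t) ^ 2 ∂stdGauss = A :=
    integral_congr_ae (Filter.Eventually.of_forall fun t => by ring)
  rw [eB1, eA2] at hBcs
  have hB9 : B ^ 2 ≤ 9 := by nlinarith [hBcs, hA3]
  have hB3 : -3 ≤ B := by nlinarith [hB9]
  -- expand η²
  have hexp : ∫ t, (q.f t - μ * t) ^ 2 * t ^ 2 ∂stdGauss = A - 2 * μ * B + μ ^ 2 * 3 := by
    have e : (fun t => (q.f t - μ * t) ^ 2 * t ^ 2)
        = fun t => (q.f t ^ 2 * t ^ 2 - 2 * μ * (q.f t * t ^ 3)) + μ ^ 2 * t ^ 4 :=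
      funext fun t => by ring
    have i1 : Integrable (fun t => 2 * μ * (q.f t * t ^ 3)) stdGauss := iFt3.const_mul _
    have i2 : Integrable (fun t => μ ^ 2 * t ^ 4) stdGauss := it4.const_mul _
    have i0 : Integrable (fun t => q.f t ^ 2 * t ^ 2 - 2 * μ * (q.f t * t ^ 3)) stdGauss :=
      iF2t2.sub i1
    rw [e, integral_add i0 i2, integral_sub iF2t2 i1, integral_const_mul,
      integral_const_mul, stdGauss_quartic, ← hA, ← hB]
  rw [hexp]
  have hp : 0 ≤ μ * (B + 3) := mul_nonneg hμ0 (by linarith)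
  nlinarith [hA3, hp]
end
end

section
/- Let f_Q be a Q-level quantizer. Then the function c ↦ E[f_Q(c·g)·g], defined for c > 0, is differentiable at c = 1, with derivative equal to Σ_{i=2}^{Q} (m_i − m_{i−1}) τ_i² φ(τ_i). -/
noncomputable section
open MeasureTheory ProbabilityTheory Real Set

/-- Standard Gaussian density `φ(τ) = (2π)^{-1/2} e^{-τ²/2}`. -/
def phi (t : ℝ) : ℝ := (Real.sqrt (2 * Real.pi))⁻¹ * Real.exp (-t ^ 2 / 2)

open Filter Topology

lemma phi_nonneg (t : ℝ) : 0 ≤ phi t := by unfold phi; positivity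

lemma continuous_phi : Continuous phi := by
  unfold phi; fun_prop

lemma hasDerivAt_neg_phi (x : ℝ) : HasDerivAt (fun t => -phi t) (x * phi x) x := by
  have h1 : HasDerivAt (fun t : ℝ => -t ^ 2 / 2) (-x) x := by
    have := ((hasDerivAt_pow 2 x).fun_neg).div_const 2
    refine this.congr_deriv ?_; ring
  have h2 : HasDerivAt (fun t : ℝ => Real.exp (-t ^ 2 / 2)) (Real.exp (-x ^ 2 / 2) * (-x)) x :=
    h1.exp
  have h3 := (h2.const_mul ((Real.sqrt (2 * Real.pi))⁻¹)).neg
  have hx : x * phi x = -((Real.sqrt (2 * Real.pi))⁻¹ * (Real.exp (-x ^ 2 / 2) * (-x))) := by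
    unfold phi; ring
  rw [hx]; exact h3

lemma tendsto_sq_half_atBot : Tendsto (fun t : ℝ => -t ^ 2 / 2) atTop atBot := by
  have h : Tendsto (fun t : ℝ => t ^ 2) atTop atTop := tendsto_pow_atTop two_ne_zero
  exact (tendsto_neg_atTop_atBot.comp h).atBot_div_const (by norm_num)

lemma tendsto_sq_half_atBot' : Tendsto (fun t : ℝ => -t ^ 2 / 2) atBot atBot := by
  have h : Tendsto (fun t : ℝ => t ^ 2) atBot atTop := by
    have h0 : Tendsto (fun t : ℝ => t ^ 2) atTop atTop := tendsto_pow_atTop two_ne_zero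
    exact (h0.comp tendsto_neg_atBot_atTop).congr (fun t => by simp [Function.comp])
  exact ((tendsto_neg_atTop_atBot.comp h).atBot_div_const (by norm_num))

lemma tendsto_neg_phi_atTop : Tendsto (fun t => -phi t) atTop (𝓝 0) := by
  have := ((Real.tendsto_exp_atBot.comp tendsto_sq_half_atBot).const_mul
    ((Real.sqrt (2 * Real.pi))⁻¹)).neg
  simpa [phi, Function.comp] using this

lemma tendsto_neg_phi_atBot : Tendsto (fun t => -phi t) atBot (𝓝 0) := by
  have := ((Real.tendsto_exp_atBot.comp tendsto_sq_half_atBot').const_mul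
    ((Real.sqrt (2 * Real.pi))⁻¹)).neg
  simpa [phi, Function.comp] using this

lemma integrable_mul_phi : Integrable (fun t : ℝ => t * phi t) := by
  have := integrable_mul_exp_neg_mul_sq (b := 2⁻¹) (by norm_num)
  have h2 := this.const_mul ((Real.sqrt (2 * Real.pi))⁻¹)
  apply h2.congr
  filter_upwards with t
  unfold phi; ring_nf

/-- FTC pieces -/
lemma J_Ici (r : ℝ) : ∫ t in Ici r, t * phi t = phi r := by
  rw [integral_Ici_eq_integral_Ioi]
  have := integral_Ioi_of_hasDerivAt_of_tendsto (f := fun t => -phi t)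
    (f' := fun t => t * phi t) (a := r)
    (continuous_phi.neg.continuousWithinAt)
    (fun x _ => hasDerivAt_neg_phi x)
    (integrable_mul_phi.integrableOn)
    tendsto_neg_phi_atTop
  rw [this]; ring

lemma J_Iio (r : ℝ) : ∫ t in Iio r, t * phi t = -phi r := by
  rw [setIntegral_congr_set Iio_ae_eq_Iic]
  have := integral_Iic_of_hasDerivAt_of_tendsto (f := fun t => -phi t)
    (f' := fun t => t * phi t) (a := r)
    (continuous_phi.neg.continuousWithinAt)
    (fun x _ => hasDerivAt_neg_phi x)
    (integrable_mul_phi.integrableOn)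
    tendsto_neg_phi_atBot
  rw [this]; ring

lemma J_Ico (r s : ℝ) (h : r ≤ s) : ∫ t in Ico r s, t * phi t = phi r - phi s := by
  rw [setIntegral_congr_set Ico_ae_eq_Ioc, ← intervalIntegral.integral_of_le h]
  have := intervalIntegral.integral_eq_sub_of_hasDerivAt (f := fun t => -phi t)
    (f' := fun t => t * phi t) (a := r) (b := s)
    (fun x _ => hasDerivAt_neg_phi x)
    (integrable_mul_phi.intervalIntegrable)
  rw [this]; ring

lemma J_univ : ∫ t : ℝ, t * phi t = 0 := by
  have := integral_of_hasDerivAt_of_tendsto (f := fun t => -phi t)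
    (f' := fun t => t * phi t)
    (fun x => hasDerivAt_neg_phi x) integrable_mul_phi
    tendsto_neg_phi_atBot tendsto_neg_phi_atTop
  simpa using this

/-- conversion to Lebesgue -/
lemma gaussianPDFReal_eq : gaussianPDFReal 0 1 = phi := by
  funext x
  simp only [gaussianPDFReal, phi, NNReal.coe_one, mul_one, sub_zero]

lemma gaussianPDF_eq : gaussianPDF 0 1 = fun x => ((phi x).toNNReal : ENNReal) := by
  funext x
  rw [gaussianPDF, gaussianPDFReal_eq, ENNReal.ofReal]

lemma integral_stdGauss (g : ℝ → ℝ) : ∫ t, g t ∂stdGauss = ∫ t, g t * phi t := by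
  rw [show stdGauss = volume.withDensity (gaussianPDF 0 1) from
    gaussianReal_of_var_ne_zero _ one_ne_zero, gaussianPDF_eq,
    integral_withDensity_eq_integral_smul (continuous_phi.measurable.real_toNNReal) g]
  congr 1; funext t
  simp [NNReal.smul_def, Real.coe_toNNReal _ (phi_nonneg t), mul_comm]

/-- `phi (x/c)` extended by `0` at `±∞`. -/
def Phi (c : ℝ) (x : EReal) : ℝ := if x = ⊥ then 0 else if x = ⊤ then 0 else phi (x.toReal / c)

/-- derivative at `c = 1` of `c ↦ Phi c x`, extended by `0` at `±∞`. -/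
def DD (x : EReal) : ℝ := if x = ⊥ then 0 else if x = ⊤ then 0 else x.toReal ^ 2 * phi x.toReal

lemma measurableSet_S (c : ℝ) (a b : EReal) :
    MeasurableSet {t : ℝ | a ≤ ((c * t : ℝ) : EReal) ∧ ((c * t : ℝ) : EReal) < b} := by
  have hc : Continuous fun t : ℝ => ((c * t : ℝ) : EReal) :=
    continuous_coe_real_ereal.comp (continuous_const.mul continuous_id)
  have h1 : MeasurableSet {t : ℝ | a ≤ ((c * t : ℝ) : EReal)} :=
    hc.measurable measurableSet_Ici
  have h2 : MeasurableSet {t : ℝ | ((c * t : ℝ) : EReal) < b} :=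
    hc.measurable measurableSet_Iio
  exact h1.inter h2

lemma K_integral {c : ℝ} (hc : 0 < c) {a b : EReal} (hab : a < b) :
    ∫ t in {t : ℝ | a ≤ ((c * t : ℝ) : EReal) ∧ ((c * t : ℝ) : EReal) < b}, t * phi t
      = Phi c a - Phi c b := by
  induction a using EReal.rec with
  | bot =>
    induction b using EReal.rec with
    | bot => exact absurd hab (lt_irrefl _)
    | coe s =>
      have hset : {t : ℝ | (⊥ : EReal) ≤ ((c * t : ℝ) : EReal) ∧ ((c * t : ℝ) : EReal) < (s : EReal)}
          = Iio (s / c) := by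
        ext t
        simp only [mem_setOf_eq, bot_le, true_and, EReal.coe_lt_coe_iff, mem_Iio]
        rw [lt_div_iff₀ hc, mul_comm]
      rw [hset, J_Iio]
      simp [Phi]
    | top =>
      have hset : {t : ℝ | (⊥ : EReal) ≤ ((c * t : ℝ) : EReal) ∧ ((c * t : ℝ) : EReal) < (⊤ : EReal)}
          = univ := by
        ext t; simpa using EReal.coe_lt_top (c * t)
      rw [hset, setIntegral_univ, J_univ]
      simp [Phi]
  | coe r =>
    induction b using EReal.rec with
    | bot => exact absurd hab (not_lt_bot)
    | coe s =>
      have hrs : r ≤ s := le_of_lt (EReal.coe_lt_coe_iff.mp hab)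
      have hset : {t : ℝ | ((r : ℝ) : EReal) ≤ ((c * t : ℝ) : EReal) ∧ ((c * t : ℝ) : EReal) < (s : EReal)}
          = Ico (r / c) (s / c) := by
        ext t
        simp only [mem_setOf_eq, EReal.coe_le_coe_iff, EReal.coe_lt_coe_iff, mem_Ico]
        rw [div_le_iff₀ hc, lt_div_iff₀ hc, mul_comm]
      rw [hset, J_Ico _ _ (by gcongr : r / c ≤ s / c)]
      simp [Phi]
    | top =>
      have hset : {t : ℝ | ((r : ℝ) : EReal) ≤ ((c * t : ℝ) : EReal) ∧ ((c * t : ℝ) : EReal) < (⊤ : EReal)}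
          = Ici (r / c) := by
        ext t
        simp only [mem_setOf_eq, EReal.coe_le_coe_iff, EReal.coe_lt_top, and_true, mem_Ici]
        rw [div_le_iff₀ hc, mul_comm]
      rw [hset, J_Ici]
      simp [Phi]
  | top => exact absurd hab (not_top_lt)

lemma cell_mem {Q : ℕ} (q : Quantizer Q) (x : ℝ) :
    ∃ i : Fin Q, q.τ i.castSucc ≤ (x : EReal) ∧ (x : EReal) < q.τ i.succ := by
  classical
  set s : Finset (Fin (Q + 1)) := Finset.univ.filter (fun j => q.τ j ≤ (x : EReal)) with hs
  have h0 : (0 : Fin (Q + 1)) ∈ s := by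
    simp [hs, q.τ_bot]
  have hne : s.Nonempty := ⟨0, h0⟩
  have hi'le : q.τ (s.max' hne) ≤ (x : EReal) :=
    (Finset.mem_filter.mp (s.max'_mem hne)).2
  have hne_last : s.max' hne ≠ Fin.last Q := by
    intro h
    rw [h, q.τ_top] at hi'le
    exact (EReal.coe_lt_top x).not_ge hi'le
  obtain ⟨i, hi⟩ := Fin.exists_castSucc_eq.mpr hne_last
  refine ⟨i, hi ▸ hi'le, ?_⟩
  by_contra h
  push_neg at h
  have hmem : i.succ ∈ s := by
    rw [hs, Finset.mem_filter]
    exact ⟨Finset.mem_univ _, h⟩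
  have hle := s.le_max' _ hmem
  rw [← hi] at hle
  exact (Fin.castSucc_lt_succ (i := i)).not_ge hle

lemma cell_disj {Q : ℕ} (q : Quantizer Q) {i j : Fin Q} (hij : i ≠ j) (x : ℝ)
    (hi : q.τ i.castSucc ≤ (x : EReal) ∧ (x : EReal) < q.τ i.succ)
    (hj : q.τ j.castSucc ≤ (x : EReal) ∧ (x : EReal) < q.τ j.succ) : False := by
  rcases hij.lt_or_gt with hlt | hlt
  · have h1 : q.τ i.succ ≤ q.τ j.castSucc :=
      q.τ_mono.monotone (Fin.succ_le_castSucc_iff.mpr hlt)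
    exact absurd (hi.2.trans_le (h1.trans hj.1)) (lt_irrefl _)
  · have h1 : q.τ j.succ ≤ q.τ i.castSucc :=
      q.τ_mono.monotone (Fin.succ_le_castSucc_iff.mpr hlt)
    exact absurd (hj.2.trans_le (h1.trans hi.1)) (lt_irrefl _)

lemma decomp {Q : ℕ} (q : Quantizer Q) (c : ℝ) (t : ℝ) :
    q.f (c * t) * t * phi t = ∑ i : Fin Q,
      Set.indicator {u : ℝ | q.τ i.castSucc ≤ ((c * u : ℝ) : EReal) ∧ ((c * u : ℝ) : EReal) < q.τ i.succ}
        (fun u => q.m i * (u * phi u)) t := by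
  obtain ⟨i0, hi0⟩ := cell_mem q (c * t)
  rw [Finset.sum_eq_single i0]
  · rw [Set.indicator_of_mem (by exact hi0), q.f_eq i0 _ hi0.1 hi0.2]
    ring
  · intro j _ hj
    apply Set.indicator_of_notMem
    intro hmem
    exact cell_disj q hj (c * t) hmem hi0
  · intro h
    exact absurd (Finset.mem_univ i0) h

lemma hasDerivAt_Phi (x : EReal) : HasDerivAt (fun c => Phi c x) (DD x) 1 := by
  induction x using EReal.rec with
  | bot => simpa [Phi, DD] using hasDerivAt_const (1 : ℝ) (0 : ℝ)
  | top => simpa [Phi, DD] using hasDerivAt_const (1 : ℝ) (0 : ℝ)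
  | coe r =>
    have hfun : (fun c => Phi c (r : EReal)) = fun c => phi (r / c) := by
      funext c; simp [Phi]
    have hinner : HasDerivAt (fun c : ℝ => r / c) (-r) 1 := by
      simpa using (hasDerivAt_const (1:ℝ) r).fun_div (hasDerivAt_id (1:ℝ)) (by norm_num)
    have houter : HasDerivAt phi (-(r * phi r)) r := by
      simpa using (hasDerivAt_neg_phi r).fun_neg
    have houter' : HasDerivAt phi (-(r * phi r)) (r / 1) := by rwa [div_one]
    have := houter'.comp 1 hinner
    rw [hfun]
    have heq : DD (r : EReal) = -(r * phi r) * (-r) := by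
      simp [DD]; try ring
    rw [heq]
    exact this

lemma abel_sum (a d : ℕ → ℝ) (h0 : d 0 = 0) (n : ℕ) :
    ∑ k ∈ Finset.range n, a k * (d k - d (k + 1)) =
      (∑ k ∈ Finset.range n, (if k = 0 then 0 else (a k - a (k - 1)) * d k))
        - a (n - 1) * d n := by
  induction n with
  | zero => simp [h0]
  | succ n ih =>
    rw [Finset.sum_range_succ, Finset.sum_range_succ, ih]
    rcases Nat.eq_zero_or_pos n with hn | hn
    · subst hn; simp [h0]; try ring
    · have h2 : ¬ (n = 0) := hn.ne'
      simp only [if_neg h2, Nat.succ_sub_one]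
      ring

def aaF {Q : ℕ} (q : Quantizer Q) (k : ℕ) : ℝ := if h : k < Q then q.m ⟨k, h⟩ else 0
def ddF {Q : ℕ} (q : Quantizer Q) (k : ℕ) : ℝ := if h : k < Q + 1 then DD (q.τ ⟨k, h⟩) else 0

/-- The function `c ↦ E[f_Q(c·g)·g]` is differentiable at `c = 1`,
with derivative `Σ_{i=2}^{Q} (m_i − m_{i−1}) τ_i² φ(τ_i)`. -/
theorem quantizer_mu_deriv {Q : ℕ} (q : Quantizer Q) :
    HasDerivAt (fun c : ℝ => ∫ t, q.f (c * t) * t ∂stdGauss)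
      (∑ i : Fin Q, if h : (i : ℕ) = 0 then 0 else
        (q.m i - q.m ⟨(i : ℕ) - 1, lt_of_le_of_lt (Nat.sub_le _ _) i.isLt⟩) * (q.τ i.castSucc).toReal ^ 2 * phi (q.τ i.castSucc).toReal)
      1 := by
  classical
  have hFderiv : HasDerivAt
      (fun c => ∑ i : Fin Q, q.m i * (Phi c (q.τ i.castSucc) - Phi c (q.τ i.succ)))
      (∑ i : Fin Q, q.m i * (DD (q.τ i.castSucc) - DD (q.τ i.succ))) 1 :=
    HasDerivAt.fun_sum fun i _ => ((hasDerivAt_Phi _).sub (hasDerivAt_Phi _)).const_mul (q.m i)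
  have hEq : ∀ c : ℝ, c ∈ Ioi (0:ℝ) → (∫ t, q.f (c * t) * t ∂stdGauss)
      = ∑ i : Fin Q, q.m i * (Phi c (q.τ i.castSucc) - Phi c (q.τ i.succ)) := by
    intro c hc
    rw [integral_stdGauss]
    have hint : ∀ i : Fin Q, Integrable (Set.indicator
        {u : ℝ | q.τ i.castSucc ≤ ((c * u : ℝ) : EReal) ∧ ((c * u : ℝ) : EReal) < q.τ i.succ}
        (fun u => q.m i * (u * phi u))) :=
      fun i => (integrable_mul_phi.const_mul (q.m i)).indicator (measurableSet_S c _ _)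
    calc (∫ t, q.f (c * t) * t * phi t)
        = ∫ t, ∑ i : Fin Q, Set.indicator
            {u : ℝ | q.τ i.castSucc ≤ ((c * u : ℝ) : EReal) ∧ ((c * u : ℝ) : EReal) < q.τ i.succ}
            (fun u => q.m i * (u * phi u)) t := by
          congr 1; funext t; exact decomp q c t
      _ = ∑ i : Fin Q, ∫ t, Set.indicator
            {u : ℝ | q.τ i.castSucc ≤ ((c * u : ℝ) : EReal) ∧ ((c * u : ℝ) : EReal) < q.τ i.succ}
            (fun u => q.m i * (u * phi u)) t :=
          integral_finset_sum _ (fun i _ => hint i)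
      _ = ∑ i : Fin Q, q.m i * (Phi c (q.τ i.castSucc) - Phi c (q.τ i.succ)) := by
          refine Finset.sum_congr rfl (fun i _ => ?_)
          rw [integral_indicator (measurableSet_S c _ _), integral_const_mul,
            K_integral hc (q.τ_mono (Fin.castSucc_lt_succ (i := i)))]
  have hev : (fun c : ℝ => ∫ t, q.f (c * t) * t ∂stdGauss) =ᶠ[nhds 1]
      (fun c => ∑ i : Fin Q, q.m i * (Phi c (q.τ i.castSucc) - Phi c (q.τ i.succ))) :=
    Filter.eventuallyEq_of_mem (isOpen_Ioi.mem_nhds (by norm_num : (0:ℝ) < 1)) hEq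
  have hD := hFderiv.congr_of_eventuallyEq hev
  -- now rewrite the derivative value
  have hdd0 : ddF q 0 = 0 := by
    have h0 : (⟨0, Nat.succ_pos Q⟩ : Fin (Q+1)) = 0 := rfl
    rw [ddF, dif_pos (Nat.succ_pos Q), h0, q.τ_bot]
    simp [DD]
  have hddQ : ddF q Q = 0 := by
    have h0 : (⟨Q, Nat.lt_succ_self Q⟩ : Fin (Q+1)) = Fin.last Q := rfl
    rw [ddF, dif_pos (Nat.lt_succ_self Q), h0, q.τ_top]
    simp [DD]
  have hA : (∑ i : Fin Q, q.m i * (DD (q.τ i.castSucc) - DD (q.τ i.succ)))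
      = ∑ k ∈ Finset.range Q, aaF q k * (ddF q k - ddF q (k+1)) := by
    rw [← Fin.sum_univ_eq_sum_range (fun k => aaF q k * (ddF q k - ddF q (k+1))) Q]
    refine Finset.sum_congr rfl (fun i _ => ?_)
    have e1 : (⟨(i:ℕ), Nat.lt_succ_of_lt i.isLt⟩ : Fin (Q+1)) = i.castSucc := Fin.ext (by simp)
    have e2 : (⟨(i:ℕ)+1, Nat.succ_lt_succ i.isLt⟩ : Fin (Q+1)) = i.succ := Fin.ext (by simp)
    rw [show aaF q (i:ℕ) = q.m i from by rw [aaF, dif_pos i.isLt],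
      show ddF q (i:ℕ) = DD (q.τ i.castSucc) from by
        rw [ddF, dif_pos (Nat.lt_succ_of_lt i.isLt), e1],
      show ddF q ((i:ℕ)+1) = DD (q.τ i.succ) from by
        rw [ddF, dif_pos (Nat.succ_lt_succ i.isLt), e2]]
  have hB : (∑ i : Fin Q, if h : (i : ℕ) = 0 then 0 else
        (q.m i - q.m ⟨(i : ℕ) - 1, lt_of_le_of_lt (Nat.sub_le _ _) i.isLt⟩) * (q.τ i.castSucc).toReal ^ 2 * phi (q.τ i.castSucc).toReal)
      = ∑ k ∈ Finset.range Q, (if k = 0 then 0 else (aaF q k - aaF q (k-1)) * ddF q k) := by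
    rw [← Fin.sum_univ_eq_sum_range (fun k => if k = 0 then 0 else (aaF q k - aaF q (k-1)) * ddF q k) Q]
    refine Finset.sum_congr rfl (fun i _ => ?_)
    by_cases h : (i : ℕ) = 0
    · rw [dif_pos h, if_pos h]
    · rw [dif_neg h, if_neg h]
      have e1 : (⟨(i:ℕ), Nat.lt_succ_of_lt i.isLt⟩ : Fin (Q+1)) = i.castSucc := Fin.ext (by simp)
      have hbot : q.τ i.castSucc ≠ ⊥ := by
        have h0lt : (0 : Fin (Q+1)) < i.castSucc := by
          rw [Fin.lt_def]
          simpa using Nat.pos_of_ne_zero h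
        exact ne_of_gt (q.τ_bot ▸ q.τ_mono h0lt)
      have htop : q.τ i.castSucc ≠ ⊤ :=
        ne_of_lt (q.τ_top ▸ q.τ_mono (Fin.castSucc_lt_last i))
      have hDD : DD (q.τ i.castSucc) = (q.τ i.castSucc).toReal ^ 2 * phi (q.τ i.castSucc).toReal := by
        rw [DD, if_neg hbot, if_neg htop]
      rw [show aaF q (i:ℕ) = q.m i from by rw [aaF, dif_pos i.isLt],
        show aaF q ((i:ℕ)-1) = q.m ⟨(i : ℕ) - 1, lt_of_le_of_lt (Nat.sub_le _ _) i.isLt⟩ from by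
          rw [aaF, dif_pos (lt_of_le_of_lt (Nat.sub_le _ _) i.isLt)],
        show ddF q (i:ℕ) = DD (q.τ i.castSucc) from by
          rw [ddF, dif_pos (Nat.lt_succ_of_lt i.isLt), e1],
        hDD]
      ring
  have habel := abel_sum (aaF q) (ddF q) hdd0 Q
  rw [hddQ, mul_zero, sub_zero] at habel
  rw [hB, ← habel, ← hA]
  exact hD
end
end
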